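/- Let P be a distribution of (X,Y) on R^d × {0,1} satisfying the margin assumption MA(α, C0) with α > 0, C0 > 0. For a decision rule f define f**(x, f) = f*(x) if η(x) ≠ 1/2 and f**(x, f) = f(x) if η(x) = 1/2. Then there exists a constant C > 0 depending only on α and C0 such that for every decision rule f, P_X( f(X) ≠ f**(X, f) ) ≤ C (R(f) − R(f*))^{α/(1+α)}. -/

import Mathlib

open MeasureTheory Metric Set
open scoped ENNReal NNReal

noncomputable section

/-- Feature space: `ℝ^d` with the Euclidean norm. -/
abbrev Euc (d : ℕ) := EuclideanSpace ℝ (Fin d)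

/-- A sample of size `n`: `n` points of `ℝ^d × {0,1}` (labels modelled by `Bool`). -/
abbrev Sample (d n : ℕ) := Fin n → Euc d × Bool

/-- Joint law of `(X,Y)` determined by the marginal `PX` and the regression
function `η(x) = P(Y = 1 | X = x)`. -/
def jointLaw {d : ℕ} (PX : Measure (Euc d)) (η : Euc d → ℝ) : Measure (Euc d × Bool) :=
  PX.bind fun x =>
    ENNReal.ofReal (η x) • Measure.dirac (x, true) +
      ENNReal.ofReal (1 - η x) • Measure.dirac (x, false)

/-- Law `P^{⊗n}` of an i.i.d. sample of size `n`. -/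
def sampleLaw {d : ℕ} (PX : Measure (Euc d)) (η : Euc d → ℝ) (n : ℕ) :
    Measure (Sample d n) :=
  Measure.pi fun _ => jointLaw PX η

/-- Misclassification risk `R(f) = P(Y ≠ f(X))` of a decision rule `f`. -/
def risk {d : ℕ} (PX : Measure (Euc d)) (η : Euc d → ℝ) (f : Euc d → Bool) : ℝ :=
  ∫ x, (if f x then 1 - η x else η x) ∂PX

/-- The Bayes rule `f*(x) = 1{η(x) ≥ 1/2}`. -/
def bayes {d : ℕ} (η : Euc d → ℝ) : Euc d → Bool := fun x => decide ((1 : ℝ) / 2 ≤ η x)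

/-- The plug-in rule `1{g ≥ 1/2}` associated with a function `g`. -/
def plugin {d : ℕ} (g : Euc d → ℝ) : Euc d → Bool := fun x => decide ((1 : ℝ) / 2 ≤ g x)

/-- Margin (low noise) assumption MA(α, C0):
`P_X(0 < |η(X) − 1/2| ≤ t) ≤ C0 t^α` for all `t > 0`. -/
def Margin {d : ℕ} (PX : Measure (Euc d)) (η : Euc d → ℝ) (α C0 : ℝ) : Prop :=
  ∀ t : ℝ, 0 < t →
    PX {x | 0 < |η x - 1 / 2| ∧ |η x - 1 / 2| ≤ t} ≤ ENNReal.ofReal (C0 * t ^ α)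

/-- Taylor polynomial of degree `N` of `g` at `x`, evaluated at `x'`. -/
def taylorPoly {d : ℕ} (g : Euc d → ℝ) (N : ℕ) (x x' : Euc d) : ℝ :=
  ∑ k ∈ Finset.range (N + 1), (k.factorial : ℝ)⁻¹ * iteratedFDeriv ℝ k g x (fun _ => x' - x)

/-- The Hölder class `Σ(β, L, ℝ^d)`: `g` is `⌊β⌋` times continuously differentiable
(`⌊β⌋` = largest integer strictly less than `β`, i.e. `⌈β⌉₊ - 1` for `β > 0`) and its
Taylor polynomial of degree `⌊β⌋` approximates it to order `L‖x − x'‖^β`. -/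
def HolderClass {d : ℕ} (β L : ℝ) (g : Euc d → ℝ) : Prop :=
  ContDiff ℝ (⌈β⌉₊ - 1 : ℕ) g ∧
    ∀ x x' : Euc d, |g x' - taylorPoly g (⌈β⌉₊ - 1) x x'| ≤ L * ‖x' - x‖ ^ β

/-- `(c0, r0)`-regularity of a set `A`:
`λ[A ∩ B(x,r)] ≥ c0 λ[B(x,r)]` for all `0 < r ≤ r0` and `x ∈ A`. -/
def Regular {d : ℕ} (c0 r0 : ℝ) (A : Set (Euc d)) : Prop :=
  ∀ x ∈ A, ∀ r : ℝ, 0 < r → r ≤ r0 →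
    ENNReal.ofReal c0 * volume (closedBall x r) ≤ volume (A ∩ closedBall x r)

/-- Strong density assumption with parameters `(c0, r0, μmin, μmax, K)`. -/
def StrongDensity {d : ℕ} (PX : Measure (Euc d)) (c0 r0 μmin μmax : ℝ)
    (K : Set (Euc d)) : Prop :=
  ∃ A : Set (Euc d), IsCompact A ∧ A ⊆ K ∧ Regular c0 r0 A ∧
    ∃ μ : Euc d → ℝ, Measurable μ ∧ (∀ x ∈ A, μmin ≤ μ x ∧ μ x ≤ μmax) ∧
      (∀ x, x ∉ A → μ x = 0) ∧
      PX = volume.withDensity fun x => ENNReal.ofReal (μ x)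

/-- Mild density assumption with parameters `(c0, r0, μmax, K)`. -/
def MildDensity {d : ℕ} (PX : Measure (Euc d)) (c0 r0 μmax : ℝ)
    (K : Set (Euc d)) : Prop :=
  ∃ A : Set (Euc d), IsCompact A ∧ A ⊆ K ∧ Regular c0 r0 A ∧
    ∃ μ : Euc d → ℝ, Measurable μ ∧ (∀ x ∈ A, 0 ≤ μ x ∧ μ x ≤ μmax) ∧
      (∀ x, x ∉ A → μ x = 0) ∧
      PX = volume.withDensity fun x => ENNReal.ofReal (μ x)

/-- The class `P_Σ(α, C0, β, L, c0, r0, μmin, μmax, K)`, a distribution being encoded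
by its marginal `PX` together with its regression function `η`. -/
def MemPS {d : ℕ} (α C0 β L c0 r0 μmin μmax : ℝ) (K : Set (Euc d))
    (PX : Measure (Euc d)) (η : Euc d → ℝ) : Prop :=
  IsProbabilityMeasure PX ∧ Measurable η ∧ (∀ x, η x ∈ Icc (0 : ℝ) 1) ∧
    Margin PX η α C0 ∧ HolderClass β L η ∧ StrongDensity PX c0 r0 μmin μmax K

/-- Topological support of a measure on `ℝ^d`. -/
def msupport {d : ℕ} (PX : Measure (Euc d)) : Set (Euc d) :=
  {x | ∀ r : ℝ, 0 < r → 0 < PX (ball x r)}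

/-- `f` hits the level `a` at `x0`. -/
def Hits {d : ℕ} (f : Euc d → ℝ) (a : ℝ) (x0 : Euc d) : Prop :=
  f x0 = a ∧ ∀ r : ℝ, 0 < r → ∃ x ∈ closedBall x0 r, f x ≠ a

/-- `f` crosses the level `a` at `x0`. -/
def Crosses {d : ℕ} (f : Euc d → ℝ) (a : ℝ) (x0 : Euc d) : Prop :=
  ∀ r : ℝ, 0 < r → (∃ x ∈ closedBall x0 r, f x < a) ∧ ∃ x ∈ closedBall x0 r, a < f x

/-- Expected excess risk `E[R(f̂_n)] − R(f*)` of a plug-in classifier built from the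
estimator `hatη` of the regression function. -/
def expExcess {d : ℕ} (PX : Measure (Euc d)) (η : Euc d → ℝ) {n : ℕ}
    (hatη : Sample d n → Euc d → ℝ) : ℝ :=
  (∫ ω, risk PX η (plugin (hatη ω)) ∂sampleLaw PX η n) - risk PX η (bayes η)

/-- Expected excess risk `E[R(f̂_n)] − R(f*)` of a (general) classifier. -/
def expExcessRule {d : ℕ} (PX : Measure (Euc d)) (η : Euc d → ℝ) {n : ℕ}
    (fhat : Sample d n → Euc d → Bool) : ℝ :=
  (∫ ω, risk PX η (fhat ω) ∂sampleLaw PX η n) - risk PX η (bayes η)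

/-- Empirical misclassification risk of the plug-in rule `1{g ≥ 1/2}` on a sample. -/
def empRisk {d n : ℕ} (ω : Sample d n) (g : Euc d → ℝ) : ℝ :=
  (n : ℝ)⁻¹ * ∑ i : Fin n, if plugin g (ω i).1 ≠ (ω i).2 then (1 : ℝ) else 0

/-- Lemma 6.2. Under MA(α, C0) with `α > 0`, with
`f**(x, f) = f*(x)` if `η(x) ≠ 1/2` and `f**(x, f) = f(x)` if `η(x) = 1/2`, there is a
constant `C > 0` depending only on `α` and `C0` such that every decision rule `f`
satisfies `P_X(f(X) ≠ f**(X, f)) ≤ C (R(f) − R(f*))^{α/(1+α)}`. -/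
theorem stmt19 (α C0 : ℝ) (hα : 0 < α) (hC0 : 0 < C0) :
    ∃ C : ℝ, 0 < C ∧
      ∀ (d : ℕ) (PX : Measure (Euc d)) (η : Euc d → ℝ),
        IsProbabilityMeasure PX → Measurable η → (∀ x, η x ∈ Icc (0 : ℝ) 1) →
        Margin PX η α C0 →
        ∀ f : Euc d → Bool, Measurable f →
          PX {x | f x ≠ (if η x = 1 / 2 then f x else bayes η x)} ≤
            ENNReal.ofReal
              (C * (risk PX η f - risk PX η (bayes η)) ^ (α / (1 + α))) := by
  classical
  have hα1 : (0:ℝ) < 1 + α := by linarith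
  refine ⟨C0 + 1, by linarith, ?_⟩
  intro d PX η hP hη hη01 hMA f hf
  -- the "bad" set
  have hAeq : {x | f x ≠ (if η x = 1 / 2 then f x else bayes η x)} =
      {x : Euc d | η x ≠ 1 / 2 ∧ f x ≠ bayes η x} := by
    ext x
    simp only [mem_setOf_eq]
    by_cases h : η x = 1 / 2
    · simp [h]
    · rw [if_neg h]
      tauto
  rw [hAeq]
  set A : Set (Euc d) := {x : Euc d | η x ≠ 1 / 2 ∧ f x ≠ bayes η x} with hA
  -- measurability facts
  have hbmeas : Measurable (bayes η) := by
    apply measurable_to_countable'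
    intro y
    have h12 : MeasurableSet {x : Euc d | (1:ℝ)/2 ≤ η x} := measurableSet_le measurable_const hη
    rcases y with _ | _
    · have : (bayes η) ⁻¹' {false} = {x : Euc d | (1:ℝ)/2 ≤ η x}ᶜ := by
        ext x; simp [bayes]
      rw [this]; exact h12.compl
    · have : (bayes η) ⁻¹' {true} = {x : Euc d | (1:ℝ)/2 ≤ η x} := by
        ext x; simp [bayes]
      rw [this]; exact h12
  have hfb : MeasurableSet {x : Euc d | f x = bayes η x} :=
    measurableSet_eq_fun hf hbmeas
  -- the pointwise gap function
  set g : Euc d → ℝ := fun x => if f x = bayes η x then 0 else |2 * η x - 1| with hg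
  have hgmeas : Measurable g := by
    apply Measurable.ite hfb measurable_const
    exact ((hη.const_mul 2).sub measurable_const).abs
  have hgnonneg : ∀ x, 0 ≤ g x := by
    intro x; simp only [hg]; split_ifs <;> positivity
  have hgbdd : ∀ x, ‖g x‖ ≤ 1 := by
    intro x
    have h0 := (hη01 x).1; have h1 := (hη01 x).2
    simp only [hg, Real.norm_eq_abs]
    split_ifs with h
    · simp
    · rw [abs_abs]
      rw [abs_le]; constructor <;> linarith
  have hgint : Integrable g PX :=
    ⟨hgmeas.aestronglyMeasurable, HasFiniteIntegral.of_bounded (ae_of_all _ hgbdd)⟩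
  -- integrability of risk integrands
  have hint : ∀ b : Euc d → Bool, Measurable b →
      Integrable (fun x => if b x then 1 - η x else η x) PX := by
    intro b hb
    have hbm : MeasurableSet {x : Euc d | b x = true} := hb (measurableSet_singleton true)
    refine ⟨(Measurable.ite hbm (measurable_const.sub hη) hη).aestronglyMeasurable,
      HasFiniteIntegral.of_bounded (C := 1) (ae_of_all _ fun x => ?_)⟩
    have h0 := (hη01 x).1; have h1 := (hη01 x).2
    simp only [Real.norm_eq_abs]
    split_ifs <;> rw [abs_le] <;> constructor <;> linarith
  -- excess risk identity
  set D : ℝ := risk PX η f - risk PX η (bayes η) with hDdef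
  have hD : D = ∫ x, g x ∂PX := by
    rw [hDdef, risk, risk, ← integral_sub (hint f hf) (hint (bayes η) hbmeas)]
    apply integral_congr_ae
    apply ae_of_all
    intro x
    have h0 := (hη01 x).1; have h1 := (hη01 x).2
    simp only [hg, bayes]
    by_cases hbx : (1:ℝ)/2 ≤ η x
    · simp only [decide_eq_true hbx]
      have habs : |2 * η x - 1| = 2 * η x - 1 := abs_of_nonneg (by linarith)
      cases hfx : f x <;> simp [habs] <;> ring
    · simp only [decide_eq_false hbx]
      push_neg at hbx
      have habs : |2 * η x - 1| = -(2 * η x - 1) := abs_of_neg (by linarith)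
      cases hfx : f x <;> simp [habs] <;> ring
  have hD0 : 0 ≤ D := by
    rw [hD]; exact integral_nonneg hgnonneg
  rcases eq_or_lt_of_le hD0 with h0 | hDpos
  · -- zero excess risk: the bad set is null
    have hg0 : g =ᵐ[PX] 0 :=
      (integral_eq_zero_iff_of_nonneg hgnonneg hgint).1 (by rw [← hD]; exact h0.symm)
    have hnull : PX {x | ¬ g x = (0 : Euc d → ℝ) x} = 0 := ae_iff.1 hg0
    have hsub : A ⊆ {x | ¬ g x = (0 : Euc d → ℝ) x} := by
      intro x hx
      rcases hx with ⟨hne, hfb'⟩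
      simp only [mem_setOf_eq, Pi.zero_apply, hg, if_neg hfb']
      have : 2 * η x - 1 ≠ 0 := by
        intro h; apply hne; linarith
      simpa using this
    have : PX A = 0 := measure_mono_null hsub hnull
    rw [this]
    exact bot_le
  · -- positive excess risk: split at level t
    set r : ℝ := α / (1 + α) with hr
    set t : ℝ := D ^ ((1:ℝ)/(1+α)) with ht
    have htpos : 0 < t := Real.rpow_pos_of_pos hDpos _
    have hDr : (0:ℝ) < D ^ r := Real.rpow_pos_of_pos hDpos _
    -- split
    have hsplit : PX A ≤ PX (A ∩ {x | |η x - 1/2| ≤ t}) + PX (A ∩ {x | t < |η x - 1/2|}) := by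
      have : A ⊆ (A ∩ {x | |η x - 1/2| ≤ t}) ∪ (A ∩ {x | t < |η x - 1/2|}) := by
        intro x hx
        rcases le_or_gt (|η x - 1/2|) t with h | h
        · exact Or.inl ⟨hx, h⟩
        · exact Or.inr ⟨hx, h⟩
      exact (measure_mono this).trans (measure_union_le _ _)
    -- margin bound
    have h1 : PX (A ∩ {x | |η x - 1/2| ≤ t}) ≤ ENNReal.ofReal (C0 * t ^ α) := by
      refine (measure_mono ?_).trans (hMA t htpos)
      rintro x ⟨⟨hne, -⟩, hle⟩
      exact ⟨abs_pos.2 (sub_ne_zero.2 hne), hle⟩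
    -- Markov bound
    have h2 : PX (A ∩ {x | t < |η x - 1/2|}) ≤ ENNReal.ofReal (D / (2*t)) := by
      have hsub : A ∩ {x | t < |η x - 1/2|} ⊆ {x | 2*t ≤ g x} := by
        rintro x ⟨⟨-, hfb'⟩, hlt⟩
        simp only [mem_setOf_eq, hg, if_neg hfb']
        have habs : |2 * η x - 1| = 2 * |η x - 1/2| := by
          have : 2 * η x - 1 = 2 * (η x - 1/2) := by ring
          rw [this, abs_mul]
          norm_num
        rw [habs]
        have := hlt
        simp only [mem_setOf_eq] at this
        linarith
      refine (measure_mono hsub).trans ?_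
      have hm := mul_meas_ge_le_integral_of_nonneg (ae_of_all _ hgnonneg) hgint (2*t)
      rw [← hD, measureReal_def] at hm
      have h2t : (0:ℝ) < 2*t := by linarith
      have hto : (PX {x | 2*t ≤ g x}).toReal ≤ D / (2*t) := by
        rw [le_div_iff₀ h2t]
        linarith [hm]
      exact (ENNReal.le_ofReal_iff_toReal_le (measure_ne_top PX _)
        (by positivity)).2 hto
    -- combine and simplify exponents
    have hta : t ^ α = D ^ r := by
      rw [ht, ← Real.rpow_mul hD0]
      congr 1
      rw [hr]; field_simp
    have h1r : r = 1 - 1/(1+α) := by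
      rw [hr]; field_simp; ring
    have hDt : D ^ r = D / t := by
      rw [h1r, Real.rpow_sub hDpos, Real.rpow_one, ht]
    have htd : D / (2*t) = (1/2) * D ^ r := by
      rw [hDt]
      field_simp
    calc PX A ≤ PX (A ∩ {x | |η x - 1/2| ≤ t}) + PX (A ∩ {x | t < |η x - 1/2|}) := hsplit
      _ ≤ ENNReal.ofReal (C0 * t ^ α) + ENNReal.ofReal (D / (2*t)) := add_le_add h1 h2
      _ = ENNReal.ofReal (C0 * D ^ r + (1/2) * D ^ r) := by
          rw [hta, htd, ← ENNReal.ofReal_add (by positivity) (by positivity)]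
      _ ≤ ENNReal.ofReal ((C0 + 1) * D ^ r) := ENNReal.ofReal_le_ofReal (by nlinarith)


end
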